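/- For any finite family of probability mass functions p₁, …, p_k on a finite set V, there exists a joint probability mass function μ on V^k whose i-th marginal equals p_i for each i, and such that for every v ∈ V, μ(v, v, …, v) = min_i p_i(v). -/

import Mathlib

theorem stmt2 {V : Type*} [Fintype V] [DecidableEq V] (k : ℕ)
    (p : Fin (k + 1) → V → ℝ)
    (hp0 : ∀ i v, 0 ≤ p i v) (hp1 : ∀ i, ∑ v, p i v = 1) :
    ∃ μ : (Fin (k + 1) → V) → ℝ, (∀ f, 0 ≤ μ f) ∧ (∑ f, μ f = 1) ∧
      (∀ i v, ∑ f ∈ Finset.univ.filter (fun f : Fin (k + 1) → V => f i = v), μ f = p i v) ∧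
      (∀ v, μ (fun _ => v) = Finset.univ.inf' Finset.univ_nonempty (fun i => p i v)) := by
  classical
  set m : V → ℝ := fun v => Finset.univ.inf' Finset.univ_nonempty (fun i => p i v) with hm
  set d : Fin (k+1) → V → ℝ := fun i v => p i v - m v with hd
  set β : ℝ := 1 - ∑ v, m v with hβ
  have hm_le : ∀ i v, m v ≤ p i v := fun i v => Finset.inf'_le _ (Finset.mem_univ i)
  have hm_nonneg : ∀ v, 0 ≤ m v := fun v =>
    Finset.le_inf' _ _ (fun i _ => hp0 i v)
  have hd_nonneg : ∀ i v, 0 ≤ d i v := fun i v => by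
    simp only [hd]; linarith [hm_le i v]
  have hd_sum : ∀ i, ∑ v, d i v = β := fun i => by
    simp only [hd, Finset.sum_sub_distrib, hp1 i, hβ]
  have hβ_nonneg : 0 ≤ β := by
    have h1 : ∑ v, m v ≤ ∑ v, p 0 v := Finset.sum_le_sum (fun v _ => hm_le 0 v)
    have := hp1 0
    simp only [hβ]; linarith
  have hβ0 : β = 0 → ∀ i v, d i v = 0 := by
    intro h0 i v
    have hsum : ∑ v, d i v = 0 := by rw [hd_sum i, h0]
    have := (Finset.sum_eq_zero_iff_of_nonneg (fun w _ => hd_nonneg i w)).1 hsum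
    exact this v (Finset.mem_univ v)
  set c : ℝ := (β⁻¹) ^ k with hc
  have hc_nonneg : 0 ≤ c := pow_nonneg (inv_nonneg.2 hβ_nonneg) k
  have key1 : c * β ^ (k + 1) = β := by
    rcases eq_or_lt_of_le hβ_nonneg with h | h
    · rw [← h]; simp [pow_succ]
    · rw [hc, pow_succ, ← mul_assoc, ← mul_pow, inv_mul_cancel₀ (ne_of_gt h)]
      simp
  have key2 : ∀ i v, c * (d i v * β ^ k) = d i v := by
    intro i v
    rcases eq_or_lt_of_le hβ_nonneg with h | h
    · rw [hβ0 h.symm i v]; ring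
    · rw [hc, ← mul_assoc, mul_comm _ (d i v), mul_assoc, ← mul_pow, inv_mul_cancel₀ (ne_of_gt h)]; simp
  refine ⟨fun f => (∑ v, if f = (fun _ => v) then m v else 0) + c * ∏ i, d i (f i),
    ?_, ?_, ?_, ?_⟩
  · intro f
    apply add_nonneg
    · apply Finset.sum_nonneg
      intro v _
      split
      · exact hm_nonneg v
      · exact le_refl 0
    · exact mul_nonneg hc_nonneg (Finset.prod_nonneg fun i _ => hd_nonneg i (f i))
  · rw [Finset.sum_add_distrib, ← Finset.mul_sum]
    have h1 : ∑ f : Fin (k+1) → V, ∑ v, (if f = (fun _ => v) then m v else 0)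
        = ∑ v, m v := by
      rw [Finset.sum_comm]
      refine Finset.sum_congr rfl fun v _ => ?_
      rw [Finset.sum_ite_eq' Finset.univ (fun _ => v) (fun _ => m v)]
      simp
    have h2 : ∑ f : Fin (k+1) → V, ∏ i, d i (f i) = β ^ (k + 1) := by
      have := Finset.prod_univ_sum (fun _ : Fin (k+1) => (Finset.univ : Finset V))
        (fun i v => d i v)
      rw [Fintype.piFinset_univ] at this
      rw [← this]
      simp [hd_sum]
    rw [h1, h2, key1, hβ]; ring
  · intro i v
    rw [Finset.sum_filter]
    have hsplit : ∀ f : Fin (k+1) → V,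
        (if f i = v then ((∑ w, if f = (fun _ => w) then m w else 0) + c * ∏ j, d j (f j)) else 0)
        = (∑ w, if f = (fun _ => w) ∧ f i = v then m w else 0)
          + c * ∏ j, (if j = i then (if f j = v then d j (f j) else 0) else d j (f j)) := by
      intro f
      by_cases hfi : f i = v
      · simp only [hfi, if_true, and_true]
        congr 1
        congr 1
        refine Finset.prod_congr rfl fun j _ => ?_
        by_cases hj : j = i
        · subst hj; simp [hfi]
        · simp [hj]
      · simp only [hfi, if_false]
        symm
        have : ∏ j, (if j = i then (if f j = v then d j (f j) else 0) else d j (f j)) = 0 := by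
          apply Finset.prod_eq_zero (Finset.mem_univ i)
          simp [hfi]
        rw [this]
        simp only [and_false, if_false, Finset.sum_const_zero, mul_zero, add_zero]
    rw [Finset.sum_congr rfl (fun f _ => hsplit f), Finset.sum_add_distrib, ← Finset.mul_sum]
    have h1 : ∑ f : Fin (k+1) → V, ∑ w, (if f = (fun _ => w) ∧ f i = v then m w else 0)
        = m v := by
      rw [Finset.sum_comm]
      have : ∀ w : V, (∑ f : Fin (k+1) → V, if f = (fun _ => w) ∧ f i = v then m w else 0)
          = if w = v then m w else 0 := by
        intro w
        by_cases hwv : w = v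
        · subst hwv
          simp only [if_true]
          rw [Finset.sum_eq_single (fun _ => w : Fin (k+1) → V)]
          · simp
          · intro f _ hf; simp only [ite_eq_right_iff]; intro h; exact absurd h.1 hf
          · simp
        · simp only [hwv, if_false]
          apply Finset.sum_eq_zero
          intro f _
          simp only [ite_eq_right_iff]
          rintro ⟨rfl, h2⟩
          exact absurd h2 hwv
      rw [Finset.sum_congr rfl (fun w _ => this w)]
      simp
    have h2 : ∑ f : Fin (k+1) → V,
        ∏ j, (if j = i then (if f j = v then d j (f j) else 0) else d j (f j))
        = d i v * β ^ k := by
      have hps := Finset.prod_univ_sum (fun _ : Fin (k+1) => (Finset.univ : Finset V))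
        (fun j w => if j = i then (if w = v then d j w else 0) else d j w)
      rw [Fintype.piFinset_univ] at hps
      rw [← hps]
      have hinner : ∀ j : Fin (k+1),
          (∑ w, if j = i then (if w = v then d j w else 0) else d j w)
          = if j = i then d i v else β := by
        intro j
        by_cases hj : j = i
        · subst hj; simp
        · simp [hj, hd_sum j]
      rw [Finset.prod_congr rfl (fun j _ => hinner j)]
      rw [← Finset.mul_prod_erase Finset.univ _ (Finset.mem_univ i)]
      simp only [if_true]
      congr 1
      rw [Finset.prod_congr rfl (fun j hj => by
        rw [if_neg (Finset.ne_of_mem_erase hj)]), Finset.prod_const,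
        Finset.card_erase_of_mem (Finset.mem_univ i)]
      simp [Fintype.card_fin]
    rw [h1, h2, key2 i v, hd]
    ring
  · intro v
    have h1 : (∑ w, if (fun _ : Fin (k+1) => v) = (fun _ => w) then m w else 0) = m v := by
      rw [Finset.sum_eq_single v]
      · simp
      · intro w _ hw
        rw [if_neg]
        intro h
        exact hw (congrFun h 0).symm
      · simp
    have h2 : (∏ i, d i v) = 0 := by
      obtain ⟨i, _, hi⟩ := Finset.exists_mem_eq_inf' (Finset.univ_nonempty)
        (fun i : Fin (k+1) => p i v)
      apply Finset.prod_eq_zero (Finset.mem_univ i)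
      simp only [hd]
      rw [hm, ← hi]
      ring
    show (∑ w, if (fun _ : Fin (k+1) => v) = (fun _ => w) then m w else 0) + c * ∏ i, d i v = m v
    rw [h1, h2, mul_zero, add_zero]
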